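/- Let F be a finite field and K a field with card(K) > 𝔠, and set R = F × K. Then R is an Artinian commutative ring for which the R-module R^ℕ is not free. In particular, there exists an Artinian commutative ring R such that R^ℕ is not a free R-module. -/

import Mathlib

universe u

open Cardinal

theorem not_free_aux (F K : Type u) [Field F] [Finite F] [Field K]
    (hK : Cardinal.continuum < Cardinal.mk K) :
    ¬ Module.Free (F × K) (ℕ → F × K) := by
  intro h
  set R := F × K
  let ι := Module.Free.ChooseBasisIndex R (ℕ → R)
  let b : Module.Basis ι R (ℕ → R) := Module.Free.chooseBasis R (ℕ → R)
  let u : ι → (ℕ → F) := fun i n => (b i n).1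
  let v : ι → (ℕ → K) := fun i n => (b i n).2
  -- The family `u` is linearly independent over `F`.
  have hu : LinearIndependent F u := by
    rw [linearIndependent_iff]
    intro l hl
    have hl' : Finsupp.linearCombination R b
        (l.mapRange (fun x => ((x, 0) : R)) rfl) = 0 := by
      rw [Finsupp.linearCombination_apply, Finsupp.sum_mapRange_index (by simp)]
      funext n
      have hln := congrFun hl n
      rw [Finsupp.linearCombination_apply] at hln
      simp only [Finsupp.sum, Finset.sum_apply, Pi.zero_apply] at hln ⊢
      rw [Prod.ext_iff]
      constructor
      · rw [Prod.fst_sum]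
        exact (Finset.sum_congr rfl fun x _ => rfl).trans hln
      · rw [Prod.snd_sum]
        refine Finset.sum_eq_zero fun x _ => ?_
        rw [Pi.smul_apply, smul_eq_mul, Prod.snd_mul]
        exact zero_mul _
    have hz := linearIndependent_iff.mp b.linearIndependent _ hl'
    ext i
    have := DFunLike.congr_fun hz i
    rw [Finsupp.mapRange_apply] at this
    exact (Prod.mk.injEq _ _ _ _).mp this |>.1
  -- The family `v` spans `ℕ → K` over `K`.
  have hv : Submodule.span K (Set.range v) = ⊤ := by
    rw [Submodule.eq_top_iff']
    intro w
    let m : ℕ → R := fun n => (0, w n)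
    have hm : (Finsupp.linearCombination R b) (b.repr m) = m := b.linearCombination_repr m
    have hw : w = ∑ i ∈ (b.repr m).support, (b.repr m i).2 • v i := by
      funext n
      have hmn := congrFun hm n
      rw [Finsupp.linearCombination_apply] at hmn
      simp only [Finsupp.sum, Finset.sum_apply] at hmn
      have h2 := congrArg Prod.snd hmn
      rw [Prod.snd_sum] at h2
      rw [Finset.sum_apply]
      exact h2.symm.trans (Finset.sum_congr rfl fun x _ => rfl)
    rw [hw]
    exact Submodule.sum_mem _ fun i _ =>
      Submodule.smul_mem _ _ (Submodule.subset_span ⟨i, rfl⟩)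
  -- cardinal bookkeeping
  have h1 : Module.rank K (ℕ → K) ≤ #ι := by
    have h := rank_span_le (R := K) (Set.range v)
    rw [hv, rank_top] at h
    exact h.trans Cardinal.mk_range_le
  have h2 : #K ≤ #ι :=
    ((le_max_right ℵ₀ #K).trans (max_aleph0_card_le_rank_fun_nat K)).trans h1
  have h3 : #ι ≤ #(ℕ → F) := Cardinal.mk_le_of_injective hu.injective
  have h4 : #(ℕ → F) ≤ continuum := by
    rw [Cardinal.mk_arrow]
    simp only [Cardinal.mk_nat, Cardinal.lift_aleph0, Cardinal.lift_id]
    calc Cardinal.lift.{0} #F ^ ℵ₀ ≤ continuum ^ ℵ₀ := by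
          apply Cardinal.power_le_power_right
          rw [Cardinal.lift_uzero]
          exact (Cardinal.mk_le_aleph0).trans Cardinal.aleph0_le_continuum
      _ = continuum := Cardinal.continuum_power_aleph0
  exact absurd (h2.trans (h3.trans h4)) (not_le.mpr hK)


/-- Let `F` be a finite field and `K` a field with `card K > 𝔠`, and set
`R = F × K`. Then `R` is an Artinian commutative ring for which the `R`-module `R^ℕ` is not
free. In particular, there exists an Artinian commutative ring `R` such that `R^ℕ` is not a
free `R`-module. -/
theorem exists_artinian_with_pi_not_free (F K : Type u) [Field F] [Finite F] [Field K]
    (hK : Cardinal.continuum < Cardinal.mk K) :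
    IsArtinianRing (F × K) ∧ ¬ Module.Free (F × K) (ℕ → F × K) ∧
    ∃ (R : Type u) (_ : CommRing R), IsArtinianRing R ∧ ¬ Module.Free R (ℕ → R) := by
  refine ⟨inferInstance, not_free_aux F K hK, F × K, inferInstance, inferInstance,
    not_free_aux F K hK⟩
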